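/- In a single-parameter auction environment, if an allocation rule π is monotone non-decreasing in each bidder's bid, then the payment rule defined by x_i(b) = π_i(b)·b_i − ∫₀^{b_i} π_i(z, b_{−i}) dz makes truthful bidding a dominant strategy (the mechanism is incentive compatible). -/

import Mathlib

/-- Myerson's lemma (payment direction): in a single-parameter environment,
if the allocation rule `π` is monotone in each bidder's own bid, then the
payment rule `x_i(b) = π_i(b)·b_i − ∫₀^{b_i} π_i(z, b_{−i}) dz` makes truthful
bidding a dominant strategy. -/
theorem myerson_payment_ic (n : ℕ) (π : (Fin n → ℝ) → Fin n → ℝ)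
    (hrange : ∀ (b : Fin n → ℝ) (i : Fin n), π b i ∈ Set.Icc (0 : ℝ) 1)
    (hmono : ∀ (i : Fin n) (b : Fin n → ℝ),
      Monotone fun z : ℝ => π (Function.update b i z) i)
    (x : (Fin n → ℝ) → Fin n → ℝ)
    (hx : ∀ (b : Fin n → ℝ) (i : Fin n),
      x b i = π b i * b i - ∫ z in (0 : ℝ)..(b i), π (Function.update b i z) i) :
    ∀ (i : Fin n) (b : Fin n → ℝ) (v bi : ℝ), 0 ≤ v → 0 ≤ bi →
      π (Function.update b i bi) i * v - x (Function.update b i bi) i ≤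
        π (Function.update b i v) i * v - x (Function.update b i v) i := by
  intro i b v bi _ _
  set f : ℝ → ℝ := fun z => π (Function.update b i z) i with hf
  have hfm : Monotone f := hmono i b
  have hupd : ∀ t z : ℝ, Function.update (Function.update b i t) i z
      = Function.update b i z := fun t z => by simp [Function.update_idem]
  have hxeval : ∀ t : ℝ, x (Function.update b i t) i
      = f t * t - ∫ z in (0:ℝ)..t, f z := by
    intro t
    rw [hx]
    simp only [Function.update_self, hupd, hf]
  have hπeval : ∀ t : ℝ, π (Function.update b i t) i = f t := fun t => rfl
  rw [hxeval, hxeval, hπeval, hπeval]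
  -- reduce to: f bi * (v - bi) ≤ ∫ z in bi..v, f z
  have hint : ∀ a c : ℝ, IntervalIntegrable f MeasureTheory.volume a c :=
    fun a c => hfm.intervalIntegrable
  have hsplit : (∫ z in (0:ℝ)..v, f z) - (∫ z in (0:ℝ)..bi, f z)
      = ∫ z in bi..v, f z := by
    rw [intervalIntegral.integral_interval_sub_left (hint 0 v) (hint 0 bi)]
  have key : f bi * (v - bi) ≤ ∫ z in bi..v, f z := by
    rcases le_total bi v with h | h
    · have : ∫ z in bi..v, f bi ≤ ∫ z in bi..v, f z := by
        apply intervalIntegral.integral_mono_on h (by simp) (hint bi v)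
        intro z hz
        exact hfm hz.1
      simpa [mul_comm] using this
    · have h1 : ∫ z in v..bi, f z ≤ (bi - v) * f bi := by
        have := intervalIntegral.integral_mono_on h (hint v bi)
          (intervalIntegrable_const (c := f bi)) (fun z hz => hfm hz.2)
        simpa using this
      have h2 : (∫ z in bi..v, f z) = -∫ z in v..bi, f z :=
        intervalIntegral.integral_symm v bi
      nlinarith
  nlinarith [hsplit]
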